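/- Let k ≥ 2, let P be a finite poset excluding k+k, with height h and maximum chain C = {c_1 < … < c_h}. For 0 ≤ i ≤ h, the set Ar(i,i+1) = {z ∈ P − C : dn(z) ≤ i and up(z) ≥ i+1} induces a convex subposet of P of height at most 4k−4. -/

import Mathlib

variable {α : Type*}

/-- A linear extension of a partial order, given as a binary relation. -/
def IsLinExt [PartialOrder α] (r : α → α → Prop) : Prop :=
  IsLinearOrder α r ∧ ∀ x y : α, x ≤ y → r x y

/-- A realizer: a family of linear extensions whose intersection is the order. -/
def IsRealizer [PartialOrder α] {d : ℕ} (L : Fin d → α → α → Prop) : Prop :=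
  (∀ i, IsLinExt (L i)) ∧ ∀ x y : α, x ≤ y ↔ ∀ i, L i x y

/-- The order dimension of a poset: the least positive `d` admitting a realizer of size `d`. -/
noncomputable def pdim (α : Type*) [PartialOrder α] : ℕ :=
  sInf {d | 0 < d ∧ ∃ L : Fin d → α → α → Prop, IsRealizer L}

/-- The set of (ordered) incomparable pairs of a poset. -/
def IncPairs (α : Type*) [PartialOrder α] : Set (α × α) :=
  {p | ¬ p.1 ≤ p.2 ∧ ¬ p.2 ≤ p.1}

/-- `r` reverses every pair `(x, y)` in `S`, i.e. `x > y` in `r`. -/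
def Reverses [PartialOrder α] (r : α → α → Prop) (S : Set (α × α)) : Prop :=
  ∀ p ∈ S, r p.2 p.1 ∧ ¬ r p.1 p.2

/-- A set of incomparable pairs is reversible if some linear extension reverses all of them. -/
def Reversible [PartialOrder α] (S : Set (α × α)) : Prop :=
  ∃ r, IsLinExt r ∧ Reverses r S

/-- `d` linear extensions suffice to reverse every pair of `S` (i.e. `dim S ≤ d`). -/
def RealizerOn [PartialOrder α] (d : ℕ) (S : Set (α × α)) : Prop :=
  ∃ L : Fin d → α → α → Prop, (∀ i, IsLinExt (L i)) ∧
    ∀ p ∈ S, ∃ i, L i p.2 p.1 ∧ ¬ L i p.1 p.2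

/-- The height of a subset of a poset: the maximum size of a chain contained in it. -/
noncomputable def heightSet [PartialOrder α] (S : Set α) : ℕ :=
  sSup {n | ∃ t : Finset α, ↑t ⊆ S ∧ IsChain (· ≤ ·) (↑t : Set α) ∧ t.card = n}

/-- The height of a poset: the maximum size of a chain. -/
noncomputable def pheight (α : Type*) [PartialOrder α] : ℕ :=
  heightSet (Set.univ : Set α)

/-- The poset `k + k`: the disjoint sum of two `k`-element chains. -/
def TwoChains (k : ℕ) : Type := Fin k ⊕ Fin k

def TwoChains.le {k : ℕ} : TwoChains k → TwoChains k → Prop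
  | .inl i, .inl j => i.1 ≤ j.1
  | .inr i, .inr j => i.1 ≤ j.1
  | _, _ => False

theorem TwoChains.le_refl' {k : ℕ} (x : TwoChains k) : TwoChains.le x x := by
  cases x <;> simp [TwoChains.le]

theorem TwoChains.le_trans' {k : ℕ} (x y z : TwoChains k)
    (hxy : TwoChains.le x y) (hyz : TwoChains.le y z) : TwoChains.le x z := by
  cases x <;> cases y <;> cases z <;> simp_all [TwoChains.le] <;> omega

theorem TwoChains.le_antisymm' {k : ℕ} (x y : TwoChains k)
    (hxy : TwoChains.le x y) (hyx : TwoChains.le y x) : x = y := by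
  cases x <;> cases y <;> simp_all [TwoChains.le] <;>
    exact congrArg _ (le_antisymm hxy hyx)

instance (k : ℕ) : PartialOrder (TwoChains k) where
  le := TwoChains.le
  le_refl := TwoChains.le_refl'
  le_trans := TwoChains.le_trans'
  le_antisymm := TwoChains.le_antisymm'

/-- Given a chain `c : Fin h → α` (listing `c_1 < ⋯ < c_h`), `dnN c z` is the greatest
1-based index `i` with `c_i ≤ z`, and `0` if there is none. -/
noncomputable def dnN [PartialOrder α] {h : ℕ} (c : Fin h → α) (z : α) : ℕ :=
  {i : Fin h | c i ≤ z}.ncard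

/-- `upN c z` is the least 1-based index `j` with `z ≤ c_j`, and `h + 1` if there is none. -/
noncomputable def upN [PartialOrder α] {h : ℕ} (c : Fin h → α) (z : α) : ℕ :=
  h + 1 - {i : Fin h | z ≤ c i}.ncard

/-- A pair `(x, y)` is dangerous when `dn(x) < dn(y) < up(x) < up(y)`. -/
def Dangerous [PartialOrder α] {h : ℕ} (c : Fin h → α) (p : α × α) : Prop :=
  dnN c p.1 < dnN c p.2 ∧ dnN c p.2 < upN c p.1 ∧ upN c p.1 < upN c p.2

/-- `Dn(i)`: points outside the chain whose down-index is exactly `i`. -/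
def Dn [PartialOrder α] {h : ℕ} (c : Fin h → α) (i : ℕ) : Set α :=
  {z | z ∉ Set.range c ∧ dnN c z = i}

/-- `Ar(i, i+1)`: points outside the chain with `dn(z) ≤ i` and `up(z) ≥ i + 1`. -/
def Ar [PartialOrder α] {h : ℕ} (c : Fin h → α) (i : ℕ) : Set α :=
  {z | z ∉ Set.range c ∧ dnN c z ≤ i ∧ i + 1 ≤ upN c z}

section AuxBKY

variable {α : Type*}

lemma BKY.fin_lower_mem_iff {h : ℕ} {S : Set (Fin h)}
    (hS : ∀ ⦃a b : Fin h⦄, a ≤ b → b ∈ S → a ∈ S) {j : Fin h} :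
    j ∈ S ↔ (j : ℕ) < S.ncard := by
  constructor
  · intro hj
    have hsub : (Set.Iic j) ⊆ S := fun a ha => hS ha hj
    have h1 := Set.ncard_le_ncard hsub (Set.toFinite S)
    have h2 : (Set.Iic j).ncard = (j : ℕ) + 1 := by
      rw [← Finset.coe_Iic, Set.ncard_coe_finset]; simp [Fin.card_Iic]
    omega
  · intro hj
    by_contra hjS
    have hsub : S ⊆ Set.Iio j := fun a ha => by
      by_contra hz
      exact hjS (hS (not_lt.mp hz) ha)
    have h1 := Set.ncard_le_ncard hsub (Set.toFinite _)
    have h2 : (Set.Iio j).ncard = (j : ℕ) := by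
      rw [← Finset.coe_Iio, Set.ncard_coe_finset]; simp [Fin.card_Iio]
    omega

section PO
variable [PartialOrder α] {h : ℕ} {c : Fin h → α}

lemma BKY.dn_card_le (z : α) : {i : Fin h | c i ≤ z}.ncard ≤ h := by
  have := Set.ncard_le_ncard (Set.subset_univ {i : Fin h | c i ≤ z}) (Set.toFinite _)
  simpa [Set.ncard_univ] using this

lemma BKY.up_card_le (z : α) : {i : Fin h | z ≤ c i}.ncard ≤ h := by
  have := Set.ncard_le_ncard (Set.subset_univ {i : Fin h | z ≤ c i}) (Set.toFinite _)
  simpa [Set.ncard_univ] using this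

lemma BKY.le_z_iff (hc : StrictMono c) (z : α) (j : Fin h) :
    c j ≤ z ↔ (j : ℕ) < dnN c z :=
  BKY.fin_lower_mem_iff (fun a b hab hb => le_trans (hc.monotone hab) hb)

lemma BKY.upN_pos (z : α) : 1 ≤ upN c z := by
  have := BKY.up_card_le (c := c) z; unfold upN; omega

lemma BKY.upN_le (z : α) : upN c z ≤ h + 1 := by unfold upN; omega

lemma BKY.z_le_iff (hc : StrictMono c) (z : α) (j : Fin h) :
    z ≤ c j ↔ upN c z ≤ (j : ℕ) + 1 := by
  have hupper : ∀ ⦃a b : Fin h⦄, a ≤ b → a ∈ {i : Fin h | z ≤ c i} → b ∈ {i : Fin h | z ≤ c i} :=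
    fun a b hab ha => le_trans ha (hc.monotone hab)
  have key : z ≤ c j ↔ h - {i : Fin h | z ≤ c i}.ncard ≤ (j : ℕ) := by
    constructor
    · intro hj
      have hsub : Set.Ici j ⊆ {i : Fin h | z ≤ c i} := fun a ha => hupper ha hj
      have h1 := Set.ncard_le_ncard hsub (Set.toFinite _)
      have h2 : (Set.Ici j).ncard = h - (j : ℕ) := by
        rw [← Finset.coe_Ici, Set.ncard_coe_finset]; simp [Fin.card_Ici]
      have := j.2
      omega
    · intro hj
      by_contra hjS
      have hsub : {i : Fin h | z ≤ c i} ⊆ Set.Ioi j := fun a ha => by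
        by_contra hz
        exact hjS (hupper (not_lt.mp hz) ha)
      have h1 := Set.ncard_le_ncard hsub (Set.toFinite _)
      have h2 : (Set.Ioi j).ncard = h - (j : ℕ) - 1 := by
        rw [← Finset.coe_Ioi, Set.ncard_coe_finset, Fin.card_Ioi]; omega
      have := j.2
      omega
  have hle := BKY.up_card_le (c := c) z
  unfold upN
  rw [key]
  omega

lemma BKY.dnN_mono (hc : StrictMono c) {x y : α} (hxy : x ≤ y) : dnN c x ≤ dnN c y :=
  Set.ncard_le_ncard (fun j hj => le_trans hj hxy) (Set.toFinite _)

lemma BKY.upN_mono (hc : StrictMono c) {x y : α} (hxy : x ≤ y) : upN c x ≤ upN c y := by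
  have : {i : Fin h | y ≤ c i}.ncard ≤ {i : Fin h | x ≤ c i}.ncard :=
    Set.ncard_le_ncard (fun j hj => le_trans hxy hj) (Set.toFinite _)
  unfold upN; omega

end PO

lemma BKY.twoChains_embed [PartialOrder α] {k : ℕ} (f g : Fin k → α)
    (hf : StrictMono f) (hg : StrictMono g)
    (hfg : ∀ a b : Fin k, ¬ f a ≤ g b) (hgf : ∀ a b : Fin k, ¬ g a ≤ f b) :
    Nonempty (TwoChains k ↪o α) := by
  refine ⟨OrderEmbedding.ofMapLEIff (fun x : TwoChains k => Sum.elim f g x) ?_⟩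
  intro a b
  show Sum.elim f g a ≤ Sum.elim f g b ↔ TwoChains.le a b
  cases a <;> cases b <;>
    simp only [Sum.elim_inl, Sum.elim_inr, TwoChains.le] <;>
    first
      | (rw [← Fin.le_def]; exact hf.le_iff_le)
      | (rw [← Fin.le_def]; exact hg.le_iff_le)
      | (simp only [iff_false]; first | exact hfg _ _ | exact hgf _ _)

lemma BKY.chain_enum [PartialOrder α] (t : Finset α) (ht : IsChain (· ≤ ·) (↑t : Set α)) :
    ∃ z : Fin t.card → α, StrictMono z ∧ ∀ j, z j ∈ t := by
  classical
  letI : LinearOrder {x // x ∈ t} :=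
    { (inferInstance : PartialOrder {x // x ∈ t}) with
      le_total := fun a b => by
        rcases eq_or_ne a b with rfl | hn
        · exact Or.inl le_rfl
        · have := ht (Finset.mem_coe.mpr a.2) (Finset.mem_coe.mpr b.2)
            (fun hq => hn (Subtype.ext hq))
          exact this.imp (fun hh => hh) (fun hh => hh)
      toDecidableLE := Classical.decRel _ }
  let e := monoEquivOfFin {x // x ∈ t} (Fintype.card_coe t)
  refine ⟨fun j => (e j).1, fun a b hab => ?_, fun j => (e j).2⟩
  have h1 : e a < e b := e.strictMono hab
  have h2 : e a ≤ e b ∧ e a ≠ e b := ⟨h1.le, h1.ne⟩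
  exact lt_of_le_of_ne (h2.1 : ((e a : {x // x ∈ t}) : α) ≤ e b)
    (fun hq => h2.2 (Subtype.ext hq))

lemma BKY.chain_card_le_pheight [PartialOrder α] [Fintype α] (t : Finset α)
    (ht : IsChain (· ≤ ·) (↑t : Set α)) : t.card ≤ pheight α := by
  unfold pheight heightSet
  apply le_csSup
  · refine ⟨Fintype.card α, ?_⟩
    rintro n ⟨s, -, -, rfl⟩
    exact Finset.card_le_univ s
  · exact ⟨t, by simp, ht, rfl⟩

lemma BKY.chain_in_ar_short {α : Type*} [PartialOrder α] {k : ℕ} (hk : 2 ≤ k)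
    (hexc : ¬ Nonempty (TwoChains k ↪o α))
    {h : ℕ} {c : Fin h → α} (hc : StrictMono c)
    (hmax : ∀ t : Finset α, IsChain (· ≤ ·) (↑t : Set α) → t.card ≤ h)
    (i : ℕ) {m : ℕ} (z : Fin m → α) (hz : StrictMono z)
    (hzar : ∀ j, z j ∈ Ar c i) : m ≤ 4 * k - 4 := by
  by_contra hbig
  push_neg at hbig
  have hm : 4 * k - 3 ≤ m := by omega
  have hm2 : 2 * k ≤ m := by omega
  -- basic data
  set d : Fin m → ℕ := fun j => dnN c (z j) with hd
  set u : Fin m → ℕ := fun j => upN c (z j) with hu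
  have hdmono : ∀ ⦃a b : Fin m⦄, a ≤ b → d a ≤ d b :=
    fun a b hab => BKY.dnN_mono hc (hz.monotone hab)
  have humono : ∀ ⦃a b : Fin m⦄, a ≤ b → u a ≤ u b :=
    fun a b hab => BKY.upN_mono hc (hz.monotone hab)
  have hdle : ∀ j, d j ≤ i := fun j => (hzar j).2.1
  have hule : ∀ j, i + 1 ≤ u j := fun j => (hzar j).2.2
  have huh : ∀ j, u j ≤ h + 1 := fun j => BKY.upN_le (z j)
  have hnr : ∀ j, z j ∉ Set.range c := fun j => (hzar j).1
  -- distinguished indices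
  have hkm : k - 1 < m := by omega
  have hbm : m - k < m := by omega
  have h0m : 0 < m := by omega
  set A : Fin m := ⟨k - 1, hkm⟩ with hA
  set B : Fin m := ⟨m - k, hbm⟩ with hB
  set O : Fin m := ⟨0, h0m⟩ with hO
  have hAle : ∀ j : Fin m, k - 1 ≤ (j : ℕ) → A ≤ j := fun j hj => hj
  have hBge : ∀ j : Fin m, (j : ℕ) ≤ m - k → j ≤ B := fun j hj => hj
  have hOle : ∀ j : Fin m, O ≤ j := fun j => Nat.zero_le _
  have hAge : ∀ (v : ℕ) (hv : v < m), v ≤ k - 1 → (⟨v, hv⟩ : Fin m) ≤ A :=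
    fun v hv hvk => hvk
  have hBle : ∀ (v : ℕ) (hv : v < m), m - k ≤ v → B ≤ (⟨v, hv⟩ : Fin m) :=
    fun v hv hvk => hvk
  -- z ≤ c and c ≤ z characterizations
  have hzc : ∀ (j : Fin m) (t : Fin h), z j ≤ c t ↔ u j ≤ (t : ℕ) + 1 :=
    fun j t => BKY.z_le_iff hc (z j) t
  have hcz : ∀ (j : Fin m) (t : Fin h), c t ≤ z j ↔ (t : ℕ) < d j :=
    fun j t => BKY.le_z_iff hc (z j) t
  -- Step (3): u O ≤ d A + k
  have step3 : u O ≤ d A + k := by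
    by_contra hcon
    push_neg at hcon
    have hbound : d A + k ≤ h := by
      have := huh O; omega
    apply hexc
    refine BKY.twoChains_embed (fun a : Fin k => z ⟨a, by omega⟩)
      (fun b : Fin k => c ⟨d A + b, by omega⟩) ?_ ?_ ?_ ?_
    · intro a b hab
      have := Fin.lt_def.mp hab
      exact hz (Fin.mk_lt_mk.mpr (by omega))
    · intro a b hab
      have := Fin.lt_def.mp hab
      exact hc (Fin.mk_lt_mk.mpr (by omega))
    · intro a b
      rw [hzc]
      have h1 : u O ≤ u ⟨(a : ℕ), by omega⟩ := humono (hOle _)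
      have h2 : (b : ℕ) < k := b.2
      have h3 : ((⟨d A + (b : ℕ), by omega⟩ : Fin h) : ℕ) = d A + (b : ℕ) := rfl
      omega
    · intro a b
      rw [hcz]
      have h2 : (b : ℕ) < k := b.2
      have h1 : d ⟨(b : ℕ), by omega⟩ ≤ d A := hdmono (hAge (b : ℕ) (by omega) (by omega))
      have h3 : ((⟨d A + (a : ℕ), by omega⟩ : Fin h) : ℕ) = d A + (a : ℕ) := rfl
      omega
  -- Step (5): u B ≤ u O + k - 1
  have step5 : u B ≤ u O + k - 1 := by
    by_contra hcon
    push_neg at hcon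
    have huO : i + 1 ≤ u O := hule O
    have hcon' : u O + k ≤ u B := by omega
    have hbound : u O - 1 + k ≤ h := by have := huh B; omega
    apply hexc
    refine BKY.twoChains_embed (fun a : Fin k => z ⟨m - k + a, by omega⟩)
      (fun b : Fin k => c ⟨u O - 1 + b, by omega⟩) ?_ ?_ ?_ ?_
    · intro a b hab
      have := Fin.lt_def.mp hab
      exact hz (Fin.mk_lt_mk.mpr (by omega))
    · intro a b hab
      have := Fin.lt_def.mp hab
      exact hc (Fin.mk_lt_mk.mpr (by omega))
    · intro a b
      rw [hzc]
      have h1 : u B ≤ u ⟨m - k + (a : ℕ), by omega⟩ :=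
        humono (hBle (m - k + (a : ℕ)) (by omega) (by omega))
      have h2 : (b : ℕ) < k := b.2
      have h3 : ((⟨u O - 1 + (b : ℕ), by omega⟩ : Fin h) : ℕ) = u O - 1 + (b : ℕ) := rfl
      omega
    · intro a b
      rw [hcz]
      have h1 : d ⟨m - k + (b : ℕ), by omega⟩ ≤ i := hdle _
      have h3 : ((⟨u O - 1 + (a : ℕ), by omega⟩ : Fin h) : ℕ) = u O - 1 + (a : ℕ) := rfl
      omega
  -- Step (2): maximum chain bound
  have hdAh : d A ≤ h := BKY.dn_card_le (z A)
  classical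
  have step2 : d A + (m - 2 * k + 2) + (h + 1 - u B) ≤ h := by
    have huBh : u B ≤ h + 1 := huh B
    have hdAuB : d A < u B := by have := hdle A; have := hule B; omega
    set p1 : Finset α := Finset.image (fun a : Fin (d A) => c ⟨a, by omega⟩)
      Finset.univ with hp1
    set p2 : Finset α := Finset.image
      (fun a : Fin (m - 2 * k + 2) => z ⟨k - 1 + a, by omega⟩) Finset.univ with hp2
    set p3 : Finset α := Finset.image
      (fun a : Fin (h + 1 - u B) => c ⟨u B - 1 + a, by omega⟩) Finset.univ with hp3
    have hm1 : ∀ x ∈ p1, ∃ t : Fin h, (t : ℕ) < d A ∧ c t = x := by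
      intro x hx
      simp only [hp1, Finset.mem_image, Finset.mem_univ, true_and] at hx
      obtain ⟨a, ha⟩ := hx
      exact ⟨⟨a, by omega⟩, a.2, ha⟩
    have hm2' : ∀ x ∈ p2, ∃ j : Fin m, k - 1 ≤ (j : ℕ) ∧ (j : ℕ) ≤ m - k ∧ z j = x := by
      intro x hx
      simp only [hp2, Finset.mem_image, Finset.mem_univ, true_and] at hx
      obtain ⟨a, ha⟩ := hx
      have h2 : (a : ℕ) < m - 2 * k + 2 := a.2
      have hlt : k - 1 + (a : ℕ) < m := by omega
      refine ⟨⟨k - 1 + (a : ℕ), hlt⟩, ?_, ?_, ha⟩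
      · show k - 1 ≤ k - 1 + (a : ℕ)
        omega
      · show k - 1 + (a : ℕ) ≤ m - k
        omega
    have hm3 : ∀ x ∈ p3, ∃ t : Fin h, u B ≤ (t : ℕ) + 1 ∧ c t = x := by
      intro x hx
      simp only [hp3, Finset.mem_image, Finset.mem_univ, true_and] at hx
      obtain ⟨a, ha⟩ := hx
      refine ⟨⟨u B - 1 + a, by omega⟩, ?_, ha⟩
      have := hule B
      have h3 : ((⟨u B - 1 + (a : ℕ), by omega⟩ : Fin h) : ℕ) = u B - 1 + (a : ℕ) := rfl
      omega
    -- comparabilities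
    have hcomp12 : ∀ x ∈ p1, ∀ y ∈ p2, x ≤ y := by
      intro x hx y hy
      obtain ⟨t, ht1, rfl⟩ := hm1 x hx
      obtain ⟨j, hj1, hj2, rfl⟩ := hm2' y hy
      rw [hcz]
      have : d A ≤ d j := hdmono (hAle _ hj1)
      omega
    have hcomp23 : ∀ x ∈ p2, ∀ y ∈ p3, x ≤ y := by
      intro x hx y hy
      obtain ⟨j, hj1, hj2, rfl⟩ := hm2' x hx
      obtain ⟨t, ht1, rfl⟩ := hm3 y hy
      rw [hzc]
      have : u j ≤ u B := humono (hBge _ hj2)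
      omega
    have hcomp13 : ∀ x ∈ p1, ∀ y ∈ p3, x ≤ y := by
      intro x hx y hy
      obtain ⟨t1, ht1, rfl⟩ := hm1 x hx
      obtain ⟨t2, ht2, rfl⟩ := hm3 y hy
      refine hc.monotone ?_
      show (t1 : ℕ) ≤ (t2 : ℕ)
      have := hdle A; have := hule B
      omega
    -- chain
    have hchain : IsChain (· ≤ ·) (↑(p1 ∪ p2 ∪ p3) : Set α) := by
      intro x hx y hy hne
      simp only [Finset.coe_union, Set.mem_union, Finset.mem_coe] at hx hy
      rcases hx with (hx | hx) | hx <;> rcases hy with (hy | hy) | hy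
      · obtain ⟨t1, ht1, rfl⟩ := hm1 x hx
        obtain ⟨t2, ht2, rfl⟩ := hm1 y hy
        rcases le_total t1 t2 with hq | hq
        · exact Or.inl (hc.monotone hq)
        · exact Or.inr (hc.monotone hq)
      · exact Or.inl (hcomp12 x hx y hy)
      · exact Or.inl (hcomp13 x hx y hy)
      · exact Or.inr (hcomp12 y hy x hx)
      · obtain ⟨j1, _, _, rfl⟩ := hm2' x hx
        obtain ⟨j2, _, _, rfl⟩ := hm2' y hy
        rcases le_total j1 j2 with hq | hq
        · exact Or.inl (hz.monotone hq)
        · exact Or.inr (hz.monotone hq)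
      · exact Or.inl (hcomp23 x hx y hy)
      · exact Or.inr (hcomp13 y hy x hx)
      · exact Or.inr (hcomp23 y hy x hx)
      · obtain ⟨t1, ht1, rfl⟩ := hm3 x hx
        obtain ⟨t2, ht2, rfl⟩ := hm3 y hy
        rcases le_total t1 t2 with hq | hq
        · exact Or.inl (hc.monotone hq)
        · exact Or.inr (hc.monotone hq)
    -- cards
    have hcard1 : p1.card = d A := by
      rw [hp1, Finset.card_image_of_injective _ (fun a b hab => by
        have := hc.injective hab
        simp only [Fin.mk.injEq] at this
        exact Fin.ext this), Finset.card_univ, Fintype.card_fin]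
    have hcard2 : p2.card = m - 2 * k + 2 := by
      rw [hp2, Finset.card_image_of_injective _ (fun a b hab => by
        have := hz.injective hab
        simp only [Fin.mk.injEq] at this
        exact Fin.ext (by omega)), Finset.card_univ, Fintype.card_fin]
    have hcard3 : p3.card = h + 1 - u B := by
      rw [hp3, Finset.card_image_of_injective _ (fun a b hab => by
        have := hc.injective hab
        simp only [Fin.mk.injEq] at this
        exact Fin.ext (by omega)), Finset.card_univ, Fintype.card_fin]
    -- disjointness
    have hdisj12 : Disjoint p1 p2 := by
      rw [Finset.disjoint_left]
      intro x hx hx2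
      obtain ⟨t, _, rfl⟩ := hm1 x hx
      obtain ⟨j, _, _, heq⟩ := hm2' _ hx2
      exact hnr j ⟨t, heq.symm⟩
    have hdisj32 : Disjoint p3 p2 := by
      rw [Finset.disjoint_left]
      intro x hx hx2
      obtain ⟨t, _, rfl⟩ := hm3 x hx
      obtain ⟨j, _, _, heq⟩ := hm2' _ hx2
      exact hnr j ⟨t, heq.symm⟩
    have hdisj13 : Disjoint p1 p3 := by
      rw [Finset.disjoint_left]
      intro x hx hx3
      obtain ⟨t1, ht1, rfl⟩ := hm1 x hx
      obtain ⟨t2, ht2, heq⟩ := hm3 _ hx3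
      have ht12 : t2 = t1 := hc.injective heq
      rw [ht12] at ht2
      have := hdle A; have := hule B
      omega
    have hdisj1_23 : Disjoint p1 (p2 ∪ p3) := by
      rw [Finset.disjoint_union_right]; exact ⟨hdisj12, hdisj13⟩
    have hcards : (p1 ∪ p2 ∪ p3).card = d A + (m - 2 * k + 2) + (h + 1 - u B) := by
      rw [Finset.union_assoc, Finset.card_union_of_disjoint hdisj1_23,
        Finset.card_union_of_disjoint hdisj32.symm, hcard1, hcard2, hcard3]
      omega
    have := hmax _ hchain
    omega
  -- combine
  have := hdle A
  have := hule O
  have := huh B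
  omega

end AuxBKY

/-- If `P` excludes `k + k` and `C` is a maximum chain, then for `0 ≤ i ≤ h` the set
`Ar(i, i+1)` is convex and has height at most `4k − 4`. -/
theorem ar_convex_height_le {α : Type*} [PartialOrder α] [Fintype α] (k : ℕ) (hk : 2 ≤ k)
    (hexc : ¬ Nonempty (TwoChains k ↪o α))
    (c : Fin (pheight α) → α) (hc : StrictMono c)
    (i : ℕ) (hi : i ≤ pheight α) :
    (Ar c i).OrdConnected ∧ heightSet (Ar c i) ≤ 4 * k - 4 := by
  constructor
  · constructor
    intro x hx z hz y hy
    obtain ⟨hy1, hy2⟩ := hy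
    obtain ⟨hx1, hx2, hx3⟩ := hx
    obtain ⟨hz1, hz2, hz3⟩ := hz
    refine ⟨?_, le_trans (BKY.dnN_mono hc hy2) hz2, le_trans hx3 (BKY.upN_mono hc hy1)⟩
    rintro ⟨j, rfl⟩
    have h1 : (j : ℕ) < dnN c z := (BKY.le_z_iff hc z j).mp hy2
    have h2 : upN c x ≤ (j : ℕ) + 1 := (BKY.z_le_iff hc x j).mp hy1
    omega
  · unfold heightSet
    refine csSup_le ⟨0, ∅, by simp, by simp, by simp⟩ ?_
    rintro n ⟨t, htsub, htchain, rfl⟩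
    obtain ⟨z, hzmono, hzmem⟩ := BKY.chain_enum t htchain
    exact BKY.chain_in_ar_short hk hexc hc
      (fun s hs => BKY.chain_card_le_pheight s hs) i z hzmono
      (fun j => htsub (Finset.mem_coe.mpr (hzmem j)))
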